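/- Let (U,≤) be a past-finite causal set realizing all one-point stem-extensions of finite stems. Then (U,≤) is directed: for any a, b ∈ U there exists c ∈ U with a ≤ c and b ≤ c. -/

import Mathlib

/-- A stem (downward closed subset) of a poset. -/
def IsStemIn {U : Type*} [PartialOrder U] (A : Set U) : Prop :=
  ∀ ⦃y x : U⦄, x ∈ A → y ≤ x → y ∈ A

/-- `U` realizes all one-point stem-extensions of finite stems of `U`:
whenever `A` is a finite stem of `U` and `B` is a finite poset containing (an
isomorphic copy of) `A` as a stem with `|B| = |A| + 1`, there is a
stem-embedding `g : B → U` fixing `A` pointwise. -/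
def RealizesOnePointExt (U : Type*) [PartialOrder U] : Prop :=
  ∀ (A : Set U), A.Finite → IsStemIn A →
    ∀ (B : Type) (_ : PartialOrder B) (f : A ↪o B),
      (∀ (b : B) (a : A), b ≤ f a → ∃ a' : A, f a' = b) →
      Nat.card B = A.ncard + 1 →
      ∃ g : B ↪o U, (∀ a : A, g (f a) = (a : U)) ∧
        ∀ (u : U) (b : B), u ≤ g b → ∃ b' : B, g b' = u


/-- A past-finite causal set realizing all one-point
stem-extensions of finite stems is directed. -/
theorem stmt_10 {U : Type*} [PartialOrder U]
    (hpf : ∀ x : U, {s : U | s ≤ x}.Finite)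
    (hreal : RealizesOnePointExt U) :
    ∀ a b : U, ∃ c : U, a ≤ c ∧ b ≤ c := by
  intro a b
  set A : Set U := {s | s ≤ a} ∪ {s | s ≤ b} with hA
  have hAfin : A.Finite := (hpf a).union (hpf b)
  have hstem : IsStemIn A := by
    rintro y x (hx | hx) hyx
    · exact Or.inl (le_trans hyx hx)
    · exact Or.inr (le_trans hyx hx)
  have haA : a ∈ A := Or.inl (le_refl a)
  have hbA : b ∈ A := Or.inr (le_refl b)
  haveI : Fintype A := hAfin.fintype
  haveI : Small.{0} A := inferInstance
  let S : Type := Shrink.{0} A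
  let e : A ≃ S := equivShrink A
  have hinj : Function.Injective (fun i : S => ((e.symm i : A) : U)) :=
    fun i j h => e.symm.injective (Subtype.coe_injective h)
  letI po : PartialOrder S := PartialOrder.lift (fun i => ((e.symm i : A) : U)) hinj
  -- order embedding f : A ↪o WithTop S
  have fle : ∀ x y : A, ((e x : S) : WithTop S) ≤ (e y : S) ↔ x ≤ y := by
    intro x y
    rw [WithTop.coe_le_coe]
    show ((e.symm (e x) : A) : U) ≤ ((e.symm (e y) : A) : U) ↔ x ≤ y
    rw [e.symm_apply_apply, e.symm_apply_apply]
    exact Subtype.coe_le_coe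
  let f : A ↪o WithTop S :=
    { toFun := fun x => ((e x : S) : WithTop S)
      inj' := fun x y h => e.injective (WithTop.coe_injective h)
      map_rel_iff' := by intro x y; exact fle x y }
  have hstemB : ∀ (c : WithTop S) (x : A), c ≤ f x → ∃ x' : A, f x' = c := by
    intro c x hc
    cases c with
    | top => exact absurd hc (by show ¬ (⊤ : WithTop S) ≤ ((e x : S) : WithTop S); simp)
    | coe i =>
      refine ⟨e.symm i, ?_⟩
      show ((e (e.symm i) : S) : WithTop S) = i; simp
  haveI : Fintype S := Fintype.ofEquiv A e
  have hcard : Nat.card (WithTop S) = A.ncard + 1 := by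
    have h2 : Nat.card (WithTop S) = Nat.card (Option S) := rfl
    rw [h2, Nat.card_eq_fintype_card, Fintype.card_option,
      ← Nat.card_coe_set_eq, Nat.card_eq_fintype_card, Fintype.card_congr e]
  obtain ⟨g, hg1, _⟩ := hreal A hAfin hstem (WithTop S) inferInstance f hstemB hcard
  refine ⟨g ⊤, ?_, ?_⟩
  · have : a = g (f ⟨a, haA⟩) := (hg1 ⟨a, haA⟩).symm
    rw [this]
    exact g.monotone le_top
  · have : b = g (f ⟨b, hbA⟩) := (hg1 ⟨b, hbA⟩).symm
    rw [this]
    exact g.monotone le_top
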